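/- Let α ∈ (0,1) and define u(z) := exp(α · Log z) on D := {z ∈ ℂ : 0 < |z| < 1, Im z ≥ 0}, where Log is the principal branch of the logarithm. Then u is continuous on D and holomorphic on the open upper half-disk, u maps (0,1) into the real line ℝ ⊆ ℂ and (−1,0) into the rotated line e^{iαπ}·ℝ, and for every p ∈ [1,∞): ∫_{{|z| < 1, Im z > 0}} |u′(z)|^p dA(z) < ∞ if and only if p < 2/(1−α). -/

import Mathlib

open MeasureTheory Complex ENNReal Set Metric

-- derivative lemma
lemma aux_hasDeriv (α : ℝ) {z : ℂ} (hz : z ∈ Complex.slitPlane) :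
    HasDerivAt (fun z : ℂ => Complex.exp ((α : ℂ) * Complex.log z))
      (Complex.exp ((α : ℂ) * Complex.log z) * ((α : ℂ) * z⁻¹)) z :=
  ((Complex.hasDerivAt_log hz).const_mul (α : ℂ)).cexp

lemma aux_norm (α : ℝ) {z : ℂ} (hz : z ≠ 0) (hα : 0 ≤ α) :
    ‖Complex.exp ((α : ℂ) * Complex.log z) * ((α : ℂ) * z⁻¹)‖
      = α * ‖z‖ ^ (α - 1) := by
  have habs : 0 < ‖z‖ := norm_pos_iff.mpr hz
  rw [norm_mul, norm_mul, Complex.norm_exp]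
  have h1 : ((α : ℂ) * Complex.log z).re = α * Real.log (‖z‖) := by
    simp [Complex.log_re]
  rw [h1]
  have h2 : Real.exp (α * Real.log (‖z‖)) = ‖z‖ ^ α := by
    rw [Real.rpow_def_of_pos habs, mul_comm]
  rw [h2]
  simp only [Complex.norm_real, Real.norm_eq_abs, abs_of_nonneg hα, norm_inv]
  rw [Real.rpow_sub habs, Real.rpow_one]
  ring

lemma aux_cont (α : ℝ) :
    ContinuousOn (fun z : ℂ => Complex.exp ((α : ℂ) * Complex.log z))
      {z : ℂ | 0 < ‖z‖ ∧ ‖z‖ < 1 ∧ 0 ≤ z.im} := by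
  intro z hz
  obtain ⟨h0, _, him⟩ := hz
  have hzne : z ≠ 0 := by
    intro h; rw [h] at h0; simp at h0
  have hlog : ContinuousWithinAt Complex.log
      {z : ℂ | 0 < ‖z‖ ∧ ‖z‖ < 1 ∧ 0 ≤ z.im} z := by
    by_cases hsp : z ∈ Complex.slitPlane
    · exact (continuousAt_clog hsp).continuousWithinAt
    · have him0 : z.im = 0 := by
        by_contra h
        exact hsp (Or.inr h)
      have hre : z.re < 0 := by
        rcases lt_trichotomy z.re 0 with h | h | h
        · exact h
        · exact absurd (Complex.ext h him0) hzne
        · exact absurd (Or.inl h) hsp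
      exact (Complex.continuousWithinAt_log_of_re_neg_of_im_zero hre him0).mono
        (fun w hw => hw.2.2)
  exact (Complex.continuous_exp.continuousAt.comp_continuousWithinAt
    (continuousWithinAt_const.mul hlog))

lemma aux_real (α : ℝ) (x : ℝ) (hx0 : 0 < x) :
    ∃ r : ℝ, Complex.exp ((α : ℂ) * Complex.log (x : ℂ)) = (r : ℂ) := by
  refine ⟨Real.exp (α * Real.log x), ?_⟩
  rw [← Complex.ofReal_log hx0.le]
  push_cast
  rfl

lemma aux_neg (α : ℝ) (x : ℝ) (hx : x < 0) :
    ∃ r : ℝ, Complex.exp ((α : ℂ) * Complex.log (x : ℂ)) =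
      Complex.exp ((α : ℂ) * (Real.pi : ℂ) * Complex.I) * (r : ℂ) := by
  refine ⟨Real.exp (α * Real.log (-x)), ?_⟩
  have hlog : Complex.log (x : ℂ) = (Real.log (-x) : ℂ) + Real.pi * Complex.I := by
    rw [Complex.log]
    congr 1
    · rw [Complex.norm_real, Real.norm_eq_abs, abs_of_neg hx]
    · rw [Complex.arg_ofReal_of_neg hx]
  rw [hlog, mul_add, Complex.exp_add, mul_comm]
  congr 1
  · rw [mul_assoc]
  · push_cast
    rfl

lemma aux_measS : MeasurableSet {z : ℂ | ‖z‖ < 1 ∧ 0 < z.im} := by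
  have : {z : ℂ | ‖z‖ < 1 ∧ 0 < z.im}
      = (fun z : ℂ => ‖z‖) ⁻¹' (Iio 1) ∩ Complex.im ⁻¹' (Ioi 0) := rfl
  rw [this]
  exact ((isOpen_Iio.preimage continuous_norm).inter
    (isOpen_Ioi.preimage Complex.continuous_im)).measurableSet

lemma aux_fin {s : ℝ} (hs0 : 0 < s) (hs2 : s < 2) :
    ∫⁻ z in {z : ℂ | ‖z‖ < 1 ∧ 0 < z.im},
      ENNReal.ofReal (‖z‖ ^ (-s)) < ⊤ := by
  have hsub : {z : ℂ | ‖z‖ < 1 ∧ 0 < z.im} ⊆ ball (0:ℂ) 1 := fun z hz => by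
    simpa [mem_ball_zero_iff] using hz.1
  refine lt_of_le_of_lt (lintegral_mono' (Measure.restrict_mono hsub le_rfl) le_rfl) ?_
  set μ := volume.restrict (ball (0:ℂ) 1) with hμ
  have hmeas : AEMeasurable (fun z : ℂ => ‖z‖ ^ (-s)) μ :=
    (continuous_norm.measurable.pow_const _).aemeasurable
  rw [lintegral_eq_lintegral_meas_le μ
    (ae_of_all _ fun z => Real.rpow_nonneg (norm_nonneg z) _) hmeas]
  have key : ∀ t ∈ Ioi (1:ℝ),
      μ {a : ℂ | t ≤ ‖a‖ ^ (-s)} ≤ ENNReal.ofReal (t ^ (-s⁻¹ * 2)) * NNReal.pi := by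
    intro t ht
    have ht1 : (1:ℝ) < t := ht
    have ht0 : (0:ℝ) < t := lt_trans one_pos ht1
    have hA : {a : ℂ | t ≤ ‖a‖ ^ (-s)} ⊆ closedBall (0:ℂ) (t ^ (-s⁻¹)) := by
      intro a ha
      simp only [mem_setOf_eq] at ha
      have hane : a ≠ 0 := by
        intro h
        rw [h] at ha
        simp only [norm_zero] at ha
        rw [Real.zero_rpow (neg_ne_zero.mpr hs0.ne')] at ha
        linarith
      have hpos : 0 < ‖a‖ := norm_pos_iff.mpr hane
      have h1 : (‖a‖ ^ (-s)) ^ (-s⁻¹) ≤ t ^ (-s⁻¹) :=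
        Real.rpow_le_rpow_of_nonpos ht0 ha (neg_nonpos.mpr (inv_nonneg.mpr hs0.le))
      have h2 : (‖a‖ ^ (-s)) ^ (-s⁻¹) = ‖a‖ := by
        rw [← Real.rpow_mul (norm_nonneg a)]
        rw [neg_mul_neg, mul_inv_cancel₀ hs0.ne', Real.rpow_one]
      rw [mem_closedBall_zero_iff]
      rw [h2] at h1
      exact h1
    calc μ {a : ℂ | t ≤ ‖a‖ ^ (-s)}
        ≤ volume {a : ℂ | t ≤ ‖a‖ ^ (-s)} := Measure.restrict_le_self _
      _ ≤ volume (closedBall (0:ℂ) (t ^ (-s⁻¹))) := measure_mono hA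
      _ = ENNReal.ofReal (t ^ (-s⁻¹)) ^ 2 * NNReal.pi := Complex.volume_closedBall _ _
      _ = ENNReal.ofReal (t ^ (-s⁻¹ * 2)) * NNReal.pi := by
          rw [← ENNReal.ofReal_pow (Real.rpow_nonneg ht0.le _)]
          congr 1
          rw [← Real.rpow_natCast (t ^ (-s⁻¹)) 2, ← Real.rpow_mul ht0.le]
          norm_num
  calc ∫⁻ t in Ioi (0:ℝ), μ {a : ℂ | t ≤ ‖a‖ ^ (-s)}
      ≤ ∫⁻ t in Ioc (0:ℝ) 1 ∪ Ioi 1, μ {a : ℂ | t ≤ ‖a‖ ^ (-s)} :=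
        lintegral_mono_set Ioi_subset_Ioc_union_Ioi
    _ ≤ (∫⁻ t in Ioc (0:ℝ) 1, μ {a : ℂ | t ≤ ‖a‖ ^ (-s)})
        + ∫⁻ t in Ioi (1:ℝ), μ {a : ℂ | t ≤ ‖a‖ ^ (-s)} := lintegral_union_le _ _ _
    _ < ⊤ := by
        refine ENNReal.add_lt_top.2 ⟨?_, ?_⟩
        · calc ∫⁻ t in Ioc (0:ℝ) 1, μ {a : ℂ | t ≤ ‖a‖ ^ (-s)}
              ≤ ∫⁻ _ in Ioc (0:ℝ) 1, μ univ :=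
                lintegral_mono fun t => measure_mono (subset_univ _)
            _ = μ univ * volume (Ioc (0:ℝ) 1) := setLIntegral_const _ _
            _ < ⊤ := by
                refine ENNReal.mul_lt_top ?_ (by simp)
                rw [hμ, Measure.restrict_apply_univ]
                exact measure_ball_lt_top
        · calc ∫⁻ t in Ioi (1:ℝ), μ {a : ℂ | t ≤ ‖a‖ ^ (-s)}
              ≤ ∫⁻ t in Ioi (1:ℝ), ENNReal.ofReal (t ^ (-s⁻¹ * 2)) * NNReal.pi :=
                setLIntegral_mono' measurableSet_Ioi key
            _ = (∫⁻ t in Ioi (1:ℝ), ENNReal.ofReal (t ^ (-s⁻¹ * 2))) * NNReal.pi :=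
                lintegral_mul_const' _ _ coe_ne_top
            _ < ⊤ := by
                refine ENNReal.mul_lt_top ?_ coe_lt_top
                refine IntegrableOn.setLIntegral_lt_top ?_
                refine integrableOn_Ioi_rpow_of_lt ?_ one_pos
                have : (1:ℝ) < 2 / s := (one_lt_div hs0).mpr hs2
                rw [neg_mul, neg_lt_neg_iff]
                rw [div_eq_mul_inv, mul_comm] at this
                linarith
lemma aux_inv_top : ∫⁻ t in Ioi (1:ℝ), ENNReal.ofReal t⁻¹ = ⊤ := by
  by_contra h
  replace h : ∫⁻ t in Ioi (1:ℝ), ENNReal.ofReal t⁻¹ < ⊤ := lt_top_iff_ne_top.mpr h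
  have hint : IntegrableOn (fun t : ℝ => t ^ (-1:ℝ)) (Ioi 1) := by
    constructor
    · exact ((continuous_id.measurable.pow_const _).aemeasurable).aestronglyMeasurable
    · rw [hasFiniteIntegral_iff_ofReal ?_]
      · refine lt_of_le_of_lt (le_of_eq (setLIntegral_congr_fun measurableSet_Ioi
          (fun t (ht : 1 < t) => ?_))) h
        rw [Real.rpow_neg_one]
      · filter_upwards [ae_restrict_mem measurableSet_Ioi] with t ht
        exact Real.rpow_nonneg (le_trans zero_le_one (le_of_lt ht)) _
  have := (integrableOn_Ioi_rpow_iff one_pos).mp hint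
  linarith

lemma aux_inf :
    ∫⁻ z in {z : ℂ | ‖z‖ < 1 ∧ 0 < z.im},
      ENNReal.ofReal (‖z‖ ^ (-2:ℝ)) = ⊤ := by
  set S := {z : ℂ | ‖z‖ < 1 ∧ 0 < z.im} with hS
  set μ := volume.restrict S with hμ
  have hmeas : AEMeasurable (fun z : ℂ => ‖z‖ ^ (-2:ℝ)) μ :=
    (continuous_norm.measurable.pow_const _).aemeasurable
  rw [lintegral_eq_lintegral_meas_le μ
    (ae_of_all _ fun z => Real.rpow_nonneg (norm_nonneg z) _) hmeas]
  rw [← top_le_iff]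
  have key : ∀ t ∈ Ioi (1:ℝ),
      ENNReal.ofReal t⁻¹ * ENNReal.ofReal (16:ℝ)⁻¹ * NNReal.pi
        ≤ μ {a : ℂ | t ≤ ‖a‖ ^ (-2:ℝ)} := by
    intro t ht
    have ht1 : (1:ℝ) < t := ht
    have ht0 : (0:ℝ) < t := lt_trans one_pos ht1
    set r : ℝ := t ^ (-(2:ℝ)⁻¹) with hr
    have hr0 : 0 < r := Real.rpow_pos_of_pos ht0 _
    have hr1 : r < 1 := by
      rw [hr]
      apply Real.rpow_lt_one_of_one_lt_of_neg ht1
      norm_num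
    have hrsq : r ^ (2:ℕ) = t⁻¹ := by
      rw [hr, ← Real.rpow_natCast (t ^ (-(2:ℝ)⁻¹)) 2, ← Real.rpow_mul ht0.le]
      norm_num
      exact Real.rpow_neg_one t
    -- the ball
    have hball : ball ((r/2 : ℝ) * Complex.I) (r/4) ⊆
        {a : ℂ | t ≤ ‖a‖ ^ (-2:ℝ)} ∩ S := by
      intro w hw
      rw [mem_ball] at hw
      have hdist : ‖w - (r/2 : ℝ) * Complex.I‖ < r/4 := by
        rw [← Complex.dist_eq]; exact hw
      have him : r/4 < w.im := by
        have h1 : |w.im - r/2| ≤ ‖w - (r/2 : ℝ) * Complex.I‖ := by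
          have := Complex.abs_im_le_norm (w - (r/2 : ℝ) * Complex.I)
          simpa using this
        have h2 : |w.im - r/2| < r/4 := lt_of_le_of_lt h1 hdist
        have := abs_lt.mp h2
        linarith [this.1]
      have habs : ‖w‖ < r := by
        calc ‖w‖ ≤ ‖w - (r/2 : ℝ) * Complex.I‖
              + ‖(r/2 : ℝ) * Complex.I‖ := by
              have := norm_add_le (w - (r/2 : ℝ) * Complex.I) ((r/2 : ℝ) * Complex.I)
              simpa using this
          _ < r/4 + r/2 := by
              have : ‖(r/2 : ℝ) * Complex.I‖ = r/2 := by
                simp [abs_of_pos hr0, abs_of_pos (by linarith : (0:ℝ) < r/2)]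
              rw [this]; linarith
          _ < r := by linarith
      have hwpos : 0 < ‖w‖ := lt_trans (by linarith) him |>.trans_le
        (Complex.abs_im_le_norm w |>.trans_eq' (abs_of_pos (lt_trans (by linarith) him)))
      constructor
      · show t ≤ ‖w‖ ^ (-2:ℝ)
        have h1 : r ^ (-2:ℝ) ≤ ‖w‖ ^ (-2:ℝ) :=
          Real.rpow_le_rpow_of_nonpos hwpos habs.le (by norm_num)
        have h2 : r ^ (-2:ℝ) = t := by
          rw [hr, ← Real.rpow_mul ht0.le]
          norm_num
        linarith
      · exact ⟨lt_trans habs hr1, by linarith⟩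
    calc ENNReal.ofReal t⁻¹ * ENNReal.ofReal (16:ℝ)⁻¹ * NNReal.pi
        = ENNReal.ofReal (r/4) ^ 2 * NNReal.pi := by
          rw [← ENNReal.ofReal_pow (by linarith : (0:ℝ) ≤ r/4)]
          congr 1
          rw [← ENNReal.ofReal_mul (inv_nonneg.mpr ht0.le)]
          congr 1
          rw [div_pow, hrsq]
          ring
      _ = volume (ball ((r/2 : ℝ) * Complex.I) (r/4)) := (Complex.volume_ball _ _).symm
      _ ≤ μ {a : ℂ | t ≤ ‖a‖ ^ (-2:ℝ)} := by
          rw [hμ, Measure.restrict_apply' aux_measS]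
          exact measure_mono hball
  calc (⊤ : ℝ≥0∞)
      = (∫⁻ t in Ioi (1:ℝ), ENNReal.ofReal t⁻¹) * (ENNReal.ofReal (16:ℝ)⁻¹ * NNReal.pi) := by
        rw [aux_inv_top, ENNReal.top_mul]
        refine mul_ne_zero (by simp) ?_
        exact_mod_cast (NNReal.coe_ne_zero.mp (ne_of_gt (by exact_mod_cast Real.pi_pos : (0:ℝ) < NNReal.pi)))
    _ = ∫⁻ t in Ioi (1:ℝ), ENNReal.ofReal t⁻¹ * ENNReal.ofReal (16:ℝ)⁻¹ * NNReal.pi := by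
        rw [← lintegral_mul_const' _ _ (ENNReal.mul_ne_top ofReal_ne_top coe_ne_top)]
        congr 1
        ext t
        ring
    _ ≤ ∫⁻ t in Ioi (1:ℝ), μ {a : ℂ | t ≤ ‖a‖ ^ (-2:ℝ)} :=
        setLIntegral_mono' measurableSet_Ioi key
    _ ≤ ∫⁻ t in Ioi (0:ℝ), μ {a : ℂ | t ≤ ‖a‖ ^ (-2:ℝ)} :=
        lintegral_mono_set (Ioi_subset_Ioi zero_le_one)
lemma aux_lp (α : ℝ) (hα0 : 0 < α) (hα1 : α < 1) (p : ℝ) (hp : 1 ≤ p) :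
    ((∫⁻ z in {z : ℂ | ‖z‖ < 1 ∧ 0 < z.im},
        (‖deriv (fun z : ℂ => Complex.exp ((α : ℂ) * Complex.log z)) z‖₊ : ℝ≥0∞) ^ p) < ⊤
      ↔ p < 2 / (1 - α)) := by
  have hp0 : (0:ℝ) ≤ p := le_trans zero_le_one hp
  have h1α : (0:ℝ) < 1 - α := by linarith
  have hcongr : ∫⁻ z in {z : ℂ | ‖z‖ < 1 ∧ 0 < z.im},
      (‖deriv (fun z : ℂ => Complex.exp ((α : ℂ) * Complex.log z)) z‖₊ : ℝ≥0∞) ^ p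
      = ∫⁻ z in {z : ℂ | ‖z‖ < 1 ∧ 0 < z.im},
        ENNReal.ofReal (α ^ p) * ENNReal.ofReal (‖z‖ ^ (-((1-α) * p))) := by
    refine setLIntegral_congr_fun aux_measS (fun z hz => ?_)
    obtain ⟨h1, h2⟩ := hz
    have hzne : z ≠ 0 := by
      intro h
      rw [h] at h2
      simp at h2
    have hsp : z ∈ Complex.slitPlane := Or.inr (ne_of_gt h2)
    rw [(aux_hasDeriv α hsp).deriv]
    rw [← ENNReal.ofReal_coe_nnreal, coe_nnnorm, ENNReal.ofReal_rpow_of_nonneg (norm_nonneg _) hp0]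
    rw [aux_norm α hzne hα0.le,
      Real.mul_rpow hα0.le (Real.rpow_nonneg (norm_nonneg z) _),
      ← Real.rpow_mul (norm_nonneg z),
      ENNReal.ofReal_mul (Real.rpow_nonneg hα0.le _)]
    congr 2
    ring_nf
  rw [hcongr, lintegral_const_mul' _ _ ofReal_ne_top]
  have hcne : ENNReal.ofReal (α ^ p) ≠ 0 := by
    rw [Ne, ENNReal.ofReal_eq_zero, not_le]
    positivity
  have htop : ENNReal.ofReal (α ^ p) *
      (∫⁻ z in {z : ℂ | ‖z‖ < 1 ∧ 0 < z.im},
        ENNReal.ofReal (‖z‖ ^ (-((1-α) * p)))) = ⊤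
      ↔ (∫⁻ z in {z : ℂ | ‖z‖ < 1 ∧ 0 < z.im},
        ENNReal.ofReal (‖z‖ ^ (-((1-α) * p)))) = ⊤ := by
    rw [ENNReal.mul_eq_top]
    simp [hcne, ofReal_ne_top]
  rw [lt_top_iff_ne_top, Ne, htop, ← Ne, ← lt_top_iff_ne_top]
  have hiff : p < 2 / (1 - α) ↔ (1 - α) * p < 2 := by
    rw [lt_div_iff₀ h1α, mul_comm]
  rw [hiff]
  constructor
  · intro h
    by_contra hc
    push_neg at hc
    have hmono : ∫⁻ z in {z : ℂ | ‖z‖ < 1 ∧ 0 < z.im},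
        ENNReal.ofReal (‖z‖ ^ (-2:ℝ))
        ≤ ∫⁻ z in {z : ℂ | ‖z‖ < 1 ∧ 0 < z.im},
          ENNReal.ofReal (‖z‖ ^ (-((1-α) * p))) := by
      refine setLIntegral_mono' aux_measS fun z hz => ?_
      obtain ⟨h1, h2⟩ := hz
      have hzne : z ≠ 0 := by
        intro h
        rw [h] at h2
        simp at h2
      refine ENNReal.ofReal_le_ofReal ?_
      exact Real.rpow_le_rpow_of_exponent_ge (norm_pos_iff.mpr hzne) h1.le (by linarith)
    rw [aux_inf] at hmono
    exact absurd (top_le_iff.mp hmono) h.ne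
  · intro h
    exact aux_fin (by positivity) h

/-- the example `u(z) = z^α = exp(α Log z)`, `0 < α < 1`, on the
punctured closed upper half-disk: it is continuous there, holomorphic on the open
upper half-disk, maps `(0,1)` into `ℝ` and `(-1,0)` into `e^{iαπ}ℝ`, and its
derivative is `L^p` on the open upper half-disk iff `p < 2/(1-α)`. -/
theorem stmt14 (α : ℝ) (hα0 : 0 < α) (hα1 : α < 1) :
    ContinuousOn (fun z : ℂ => Complex.exp ((α : ℂ) * Complex.log z))
      {z : ℂ | 0 < ‖z‖ ∧ ‖z‖ < 1 ∧ 0 ≤ z.im} ∧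
    DifferentiableOn ℂ (fun z : ℂ => Complex.exp ((α : ℂ) * Complex.log z))
      {z : ℂ | ‖z‖ < 1 ∧ 0 < z.im} ∧
    (∀ x : ℝ, 0 < x → x < 1 →
      ∃ r : ℝ, Complex.exp ((α : ℂ) * Complex.log (x : ℂ)) = (r : ℂ)) ∧
    (∀ x : ℝ, -1 < x → x < 0 →
      ∃ r : ℝ, Complex.exp ((α : ℂ) * Complex.log (x : ℂ)) =
        Complex.exp ((α : ℂ) * (Real.pi : ℂ) * Complex.I) * (r : ℂ)) ∧
    (∀ p : ℝ, 1 ≤ p →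
      ((∫⁻ z in {z : ℂ | ‖z‖ < 1 ∧ 0 < z.im},
          (‖deriv (fun z : ℂ => Complex.exp ((α : ℂ) * Complex.log z)) z‖₊ : ℝ≥0∞) ^ p) < ⊤
        ↔ p < 2 / (1 - α))) := by
  refine ⟨aux_cont α, ?_, fun x hx0 _ => aux_real α x hx0, fun x _ hx0 => aux_neg α x hx0,
    fun p hp => aux_lp α hα0 hα1 p hp⟩
  intro z hz
  have hsp : z ∈ Complex.slitPlane := Or.inr (ne_of_gt hz.2)
  exact (aux_hasDeriv α hsp).differentiableAt.differentiableWithinAt
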